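/- Let {X_ℓ, f_ℓ} be an inverse sequence of compact metric spaces with surjective continuous bonding functions and let g : varprojlim{X_ℓ, f_ℓ} → varprojlim{X_ℓ, f_ℓ} be a continuous function. The following are equivalent: (1) there is a point x ∈ varprojlim{X_ℓ, f_ℓ} with g(x) = x; (2) there are sequences (n_ℓ), (m_ℓ) of positive integers with m_{k+1} ≥ m_k, n_{k+1} > n_k, and m_k ≥ n_k for each k, and a sequence (H_ℓ) of upper semicontinuous set-valued functions H_ℓ : X_{m_ℓ} ⊸ X_{n_ℓ} such that (a) for each positive integer k, each j ∈ {1, …, n_k}, each positive integer r > k and each x ∈ X_{m_r}, f_{j,n_r}(H_r(x)) ⊆ f_{j,n_k}(H_k(f_{m_k,m_r}(x))); (b) for each positive integer k, each j ∈ {1, …, n_k}, and each x ∈ varprojlim{X_ℓ, f_ℓ}, p_j(g(x)) ∈ f_{j,n_k}(H_k(p_{m_k}(x))); (c) for each positive integer j and each x ∈ varprojlim{X_ℓ, f_ℓ}, lim_{k→∞} diam(f_{j,n_k}(H_k(p_{m_k}(x)))) = 0; and (d) for each positive integer k and each j ∈ {1, …, n_k}, there is a point x ∈ X_{m_k} such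 that f_{j,m_k}(x) ∈ f_{j,n_k}(H_k(x)). -/
import Mathlib


open Metric Filter Set Function

/-- The inverse limit of an inverse sequence `{X n, f n}` of spaces with
single-valued bonding maps `f n : X (n+1) → X n`. -/
def invLim (X : ℕ → Type*) (f : ∀ n, X (n + 1) → X n) : Set (∀ n, X n) :=
  {x | ∀ n, x n = f n (x (n + 1))}

/-- The composite bonding map `f_{n,m} : X m → X n` for `n ≤ m`. -/
def bondMap {X : ℕ → Type*} (f : ∀ n, X (n + 1) → X n) {n m : ℕ} (h : n ≤ m) :
    X m → X n :=
  Nat.leRecOn (C := fun k => X k → X n) h (fun {k} g => g ∘ f k) id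

/-- A set-valued function is upper semicontinuous (with nonempty closed values):
all of its values are nonempty closed sets and its graph is closed. -/
def IsUSC {A B : Type*} [TopologicalSpace A] [TopologicalSpace B] (F : A → Set B) : Prop :=
  (∀ a, (F a).Nonempty) ∧ (∀ a, IsClosed (F a)) ∧ IsClosed {p : A × B | p.2 ∈ F p.1}

/-- The `T_{n,m}` transformation of a map between inverse limits:
`T_{n,m}(g)(x) = q_n (g (p_m ⁻¹ x))`. -/
def Ttrans {X Y : ℕ → Type*} {f : ∀ n, X (n + 1) → X n} {gs : ∀ n, Y (n + 1) → Y n}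
    (g : ↥(invLim X f) → ↥(invLim Y gs)) (n m : ℕ) (x : X m) : Set (Y n) :=
  {y | ∃ z : ↥(invLim X f), z.1 m = x ∧ (g z).1 n = y}

/-- A space has the fixed point property if every continuous self-map has a fixed point. -/
def HasFPP (Z : Type*) [TopologicalSpace Z] : Prop :=
  ∀ g : Z → Z, Continuous g → ∃ p, g p = p

open Topology

section Helpers

variable {X : ℕ → Type*}

lemma bondMap_self (f : ∀ n, X (n + 1) → X n) {n : ℕ} (h : n ≤ n) :
    bondMap f h = id := by
  unfold bondMap
  exact Nat.leRecOn_self (C := fun k => X k → X n) (id : X n → X n)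

lemma bondMap_succ (f : ∀ n, X (n + 1) → X n) {n m : ℕ} (h : n ≤ m) (h' : n ≤ m + 1) :
    bondMap f h' = bondMap f h ∘ f m := by
  unfold bondMap
  exact Nat.leRecOn_succ (C := fun k => X k → X n) h (id : X n → X n)

lemma bondMap_thread (f : ∀ n, X (n + 1) → X n) {z : ∀ n, X n} (hz : z ∈ invLim X f)
    {n : ℕ} : ∀ {m : ℕ} (h : n ≤ m), bondMap f h (z m) = z n := by
  intro m
  induction m with
  | zero =>
    intro h
    have hn : n = 0 := Nat.le_zero.mp h
    subst hn
    rw [bondMap_self f h]; rfl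
  | succ m ih =>
    intro h
    by_cases hm : n ≤ m
    · rw [bondMap_succ f hm h, comp_apply, ← hz m]
      exact ih hm
    · have hn : n = m + 1 := by omega
      subst hn
      rw [bondMap_self f h]; rfl

lemma f_bondMap (f : ∀ n, X (n + 1) → X n) {n : ℕ} :
    ∀ {m : ℕ} (h : n + 1 ≤ m) (h' : n ≤ m) (x : X m),
      f n (bondMap f h x) = bondMap f h' x := by
  intro m
  induction m with
  | zero => intro h; exact absurd h (by omega)
  | succ m ih =>
    intro h h' x
    by_cases hm : n + 1 ≤ m
    · rw [bondMap_succ f hm h, bondMap_succ f (by omega : n ≤ m) h']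
      exact ih hm (by omega) (f m x)
    · have hn : n = m := by omega
      subst hn
      rw [bondMap_self f h, bondMap_succ f le_rfl h', bondMap_self f le_rfl]
      rfl

lemma bondMap_continuous [∀ n, TopologicalSpace (X n)] (f : ∀ n, X (n + 1) → X n)
    (hfc : ∀ n, Continuous (f n)) {n : ℕ} :
    ∀ {m : ℕ} (h : n ≤ m), Continuous (bondMap f h) := by
  intro m
  induction m with
  | zero =>
    intro h
    have hn : n = 0 := Nat.le_zero.mp h
    subst hn
    rw [bondMap_self f h]; exact continuous_id
  | succ m ih =>
    intro h
    by_cases hm : n ≤ m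
    · rw [bondMap_succ f hm h]; exact (ih hm).comp (hfc m)
    · have hn : n = m + 1 := by omega
      subst hn
      rw [bondMap_self f h]; exact continuous_id

lemma thread_exists (f : ∀ n, X (n + 1) → X n) (hfs : ∀ n, Surjective (f n))
    (m : ℕ) (x : X m) : ∃ z : ↥(invLim X f), z.1 m = x := by
  let G : ∀ k, X (m + k) := fun k => Nat.rec x (fun k g => surjInv (hfs (m + k)) g) k
  have hG : ∀ k, f (m + k) (G (k + 1)) = G k := fun k => surjInv_eq (hfs (m + k)) _
  have key : ∀ k (h : m ≤ m + k), bondMap f h (G k) = x := by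
    intro k
    induction k with
    | zero => intro h; rw [bondMap_self f h]; rfl
    | succ k ih =>
      intro h
      rw [bondMap_succ f (Nat.le_add_right m k) h, comp_apply, hG k]
      exact ih _
  refine ⟨⟨fun n => bondMap f (Nat.le_add_left n m) (G n), ?_⟩, key m (Nat.le_add_left m m)⟩
  intro n
  calc bondMap f (Nat.le_add_left n m) (G n)
      = bondMap f (Nat.le_add_left n m) (f (m + n) (G (n + 1))) := by rw [hG n]
    _ = bondMap f (show n ≤ m + n + 1 by omega) (G (n + 1)) :=
        (congrFun (bondMap_succ f (Nat.le_add_left n m) (by omega)) (G (n + 1))).symm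
    _ = f n (bondMap f (Nat.le_add_left (n + 1) m) (G (n + 1))) :=
        (f_bondMap f (Nat.le_add_left (n + 1) m) (by omega) (G (n + 1))).symm

lemma invLim_isClosed [∀ n, TopologicalSpace (X n)] [∀ n, T2Space (X n)]
    (f : ∀ n, X (n + 1) → X n) (hfc : ∀ n, Continuous (f n)) : IsClosed (invLim X f) := by
  have he : invLim X f = ⋂ n, {x : ∀ n, X n | x n = f n (x (n + 1))} := by
    ext x; simp [invLim, mem_iInter]
  rw [he]
  exact isClosed_iInter fun n =>
    isClosed_eq (continuous_apply n) ((hfc n).comp (continuous_apply (n + 1)))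

lemma eventually_subset' {Y : Type*} [TopologicalSpace Y] [T2Space Y] {K : ℕ → Set Y}
    (hK : ∀ n, IsCompact (K n)) (hmono : ∀ n, K (n + 1) ⊆ K n)
    {U : Set Y} (hU : IsOpen U) (hsub : (⋂ n, K n) ⊆ U) :
    ∃ N, ∀ n ≥ N, K n ⊆ U := by
  by_contra hcon
  push_neg at hcon
  have hne : ∀ n, (K n ∩ Uᶜ).Nonempty := by
    intro N
    obtain ⟨n, hn, hnsub⟩ := hcon N
    obtain ⟨p, hp, hpU⟩ := not_subset.mp hnsub
    have hKanti : Antitone K := antitone_nat_of_succ_le hmono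
    exact ⟨p, hKanti hn hp, hpU⟩
  have hint := IsCompact.nonempty_iInter_of_sequence_nonempty_isCompact_isClosed
    (fun n => K n ∩ Uᶜ) (fun n => inter_subset_inter_left _ (hmono n)) hne
    ((hK 0).inter_right hU.isClosed_compl)
    (fun n => ((hK n).inter_right hU.isClosed_compl).isClosed)
  obtain ⟨p, hp⟩ := hint
  simp only [mem_iInter, mem_inter_iff] at hp
  exact (hp 0).2 (hsub (mem_iInter.mpr fun n => (hp n).1))

lemma diam_image_tendsto {A Y : Type*} [TopologicalSpace A] [CompactSpace A] [T2Space A]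
    [MetricSpace Y] {φ : A → Y} (hφ : Continuous φ) {C : ℕ → Set A}
    (hC : ∀ n, IsClosed (C n)) (hmono : ∀ n, C (n + 1) ⊆ C n) {z : A}
    (hsub : (⋂ n, C n) ⊆ {z}) :
    Tendsto (fun n => diam (φ '' C n)) atTop (𝓝 0) := by
  rw [Metric.tendsto_atTop]
  intro ε hε
  have hsub' : (⋂ n, C n) ⊆ φ ⁻¹' ball (φ z) (ε / 3) := by
    refine hsub.trans ?_
    intro a ha
    rw [mem_singleton_iff] at ha
    subst ha
    exact mem_ball_self (by linarith)
  obtain ⟨N, hN⟩ := eventually_subset' (fun n => (hC n).isCompact) hmono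
    (isOpen_ball.preimage hφ) hsub'
  refine ⟨N, fun n hn => ?_⟩
  have h1 : φ '' C n ⊆ ball (φ z) (ε / 3) := image_subset_iff.mpr (hN n hn)
  have h2 : diam (φ '' C n) ≤ diam (ball (φ z) (ε / 3)) :=
    diam_mono h1 isBounded_ball
  have h3 : diam (ball (φ z) (ε / 3)) ≤ 2 * (ε / 3) := diam_ball (by linarith)
  rw [Real.dist_eq, sub_zero, abs_of_nonneg diam_nonneg]
  linarith

end Helpers

theorem stmt12
    {X : ℕ → Type*} [∀ n, MetricSpace (X n)] [∀ n, CompactSpace (X n)]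
    (f : ∀ n, X (n + 1) → X n)
    (hfc : ∀ n, Continuous (f n)) (hfs : ∀ n, Surjective (f n))
    (g : ↥(invLim X f) → ↥(invLim X f)) (hg : Continuous g) :
    (∃ x : ↥(invLim X f), g x = x) ↔
    (∃ ns ms : ℕ → ℕ, ∃ hnm : ∀ k, ns k ≤ ms k,
      ∃ H : ∀ k, X (ms k) → Set (X (ns k)),
      (∀ k, ms k ≤ ms (k + 1)) ∧ (∀ k, ns k < ns (k + 1)) ∧
      (∀ k, IsUSC (H k)) ∧
      (∀ k r : ℕ, k < r → ∀ (hnr : ns k ≤ ns r) (hmr : ms k ≤ ms r),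
        ∀ j : ℕ, ∀ hj : j ≤ ns k, ∀ x : X (ms r),
          bondMap f (hj.trans hnr) '' H r x ⊆
            bondMap f hj '' H k (bondMap f hmr x)) ∧
      (∀ k j : ℕ, ∀ hj : j ≤ ns k, ∀ z : ↥(invLim X f),
        (g z).1 j ∈ bondMap f hj '' H k (z.1 (ms k))) ∧
      (∀ j : ℕ, ∀ z : ↥(invLim X f),
        Tendsto (fun k =>
            diam (if hj : j ≤ ns k then
              bondMap f hj '' H k (z.1 (ms k))
            else (∅ : Set (X j))))
          atTop (nhds (0 : ℝ))) ∧
      (∀ k j : ℕ, ∀ hj : j ≤ ns k, ∃ x : X (ms k),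
        bondMap f (hj.trans (hnm k)) x ∈ bondMap f hj '' H k x)) := by
  haveI : CompactSpace ↥(invLim X f) :=
    isCompact_iff_compactSpace.mp (invLim_isClosed f hfc).isCompact
  constructor
  · rintro ⟨x₀, hx₀⟩
    refine ⟨fun k => k, fun k => k, fun k => le_rfl, fun k => Ttrans g k k,
      fun k => Nat.le_succ k, fun k => Nat.lt_succ_self k, ?_, ?_, ?_, ?_, ?_⟩
    · -- USC
      intro k
      have hgr : IsClosed {p : X k × X k | p.2 ∈ Ttrans g k k p.1} := by
        have he : {p : X k × X k | p.2 ∈ Ttrans g k k p.1} =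
            range (fun z : ↥(invLim X f) => (z.1 k, (g z).1 k)) := by
          ext ⟨x, y⟩
          simp only [mem_setOf_eq, Ttrans, mem_range, Prod.mk.injEq]
        rw [he]
        exact (isCompact_range (Continuous.prodMk
          ((continuous_apply k).comp continuous_subtype_val)
          (((continuous_apply k).comp continuous_subtype_val).comp hg))).isClosed
      refine ⟨?_, fun x => hgr.preimage (Continuous.prodMk_right x), hgr⟩
      intro x
      obtain ⟨z, hz⟩ := thread_exists f hfs k x
      exact ⟨(g z).1 k, z, hz, rfl⟩
    · -- (a)
      intro k r hkr hnr hmr j hj x y hy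
      obtain ⟨a, ⟨z, hz1, hz2⟩, rfl⟩ := hy
      refine ⟨(g z).1 k, ⟨z, ?_, rfl⟩, ?_⟩
      · rw [← hz1]; exact (bondMap_thread f z.2 hmr).symm
      · subst hz2
        rw [bondMap_thread f (g z).2 hj, bondMap_thread f (g z).2 (hj.trans hnr)]
    · -- (b)
      intro k j hj z
      exact ⟨(g z).1 k, ⟨z, rfl, rfl⟩, bondMap_thread f (g z).2 hj⟩
    · -- (c)
      intro j z
      have hCclosed : ∀ k, IsClosed {w : ↥(invLim X f) | w.1 k = z.1 k} := fun k =>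
        isClosed_eq ((continuous_apply k).comp continuous_subtype_val) continuous_const
      have hCm : ∀ k, {w : ↥(invLim X f) | w.1 (k + 1) = z.1 (k + 1)} ⊆
          {w : ↥(invLim X f) | w.1 k = z.1 k} := by
        intro k w hw
        simp only [mem_setOf_eq] at hw ⊢
        rw [w.2 k, z.2 k, hw]
      have hsub : (⋂ k, {w : ↥(invLim X f) | w.1 k = z.1 k}) ⊆ {z} := by
        intro w hw
        simp only [mem_iInter, mem_setOf_eq] at hw
        exact Subtype.ext (funext hw)
      have htend := diam_image_tendsto (φ := fun w : ↥(invLim X f) => (g w).1 j)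
        (((continuous_apply j).comp continuous_subtype_val).comp hg) hCclosed hCm hsub
      refine htend.congr' ?_
      filter_upwards [eventually_ge_atTop j] with k hk
      rw [dif_pos (show j ≤ k from hk)]
      congr 1
      ext y
      constructor
      · rintro ⟨w, hw, rfl⟩
        exact ⟨(g w).1 k, ⟨w, hw, rfl⟩, bondMap_thread f (g w).2 hk⟩
      · rintro ⟨a, ⟨w, hw, rfl⟩, rfl⟩
        exact ⟨w, hw, (bondMap_thread f (g w).2 hk).symm⟩
    · -- (d)
      intro k j hj
      have hmem : (g x₀).1 k ∈ Ttrans g k k (x₀.1 k) := ⟨x₀, rfl, rfl⟩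
      refine ⟨x₀.1 k, (g x₀).1 k, hmem, ?_⟩
      rw [hx₀]
  · rintro ⟨ns, ms, hnm, H, hms, hns, husc, ha, hb, hc, hd⟩
    have hnsM : StrictMono ns := strictMono_nat_of_lt_succ hns
    have hmsM : Monotone ms := monotone_nat_of_le_succ hms
    have hx : ∀ k, ∃ x : X (ms k), bondMap f (hnm k) x ∈ H k x := by
      intro k
      obtain ⟨x, hx⟩ := hd k (ns k) le_rfl
      rw [bondMap_self f le_rfl, image_id] at hx
      exact ⟨x, hx⟩
    choose xk hxk using hx
    have hw : ∀ k, ∃ z : ↥(invLim X f), z.1 (ms k) = xk k := fun k =>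
      thread_exists f hfs _ _
    choose wk hwk using hw
    obtain ⟨w, -, φ, hφ, hφt⟩ := isCompact_univ.tendsto_subseq (x := wk)
      (fun k => mem_univ _)
    refine ⟨w, ?_⟩
    apply Subtype.ext
    funext j
    have hin : ∀ r, (wk r).1 (ns r) ∈ H r ((wk r).1 (ms r)) := by
      intro r
      have e1 : (wk r).1 (ns r) = bondMap f (hnm r) ((wk r).1 (ms r)) :=
        (bondMap_thread f (wk r).2 (hnm r)).symm
      rw [e1, hwk r]
      exact hxk r
    have key : ∀ k (hjk : j ≤ ns k), w.1 j ∈ bondMap f hjk '' H k (w.1 (ms k)) := by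
      intro k hjk
      have hmemgen : ∀ r, k ≤ r →
          (wk r).1 j ∈ bondMap f hjk '' H k ((wk r).1 (ms k)) := by
        intro r hr
        rcases hr.lt_or_eq with hlt | heq
        · have h2 : (wk r).1 j ∈
              bondMap f (hjk.trans (hnsM.monotone hlt.le)) '' H r ((wk r).1 (ms r)) :=
            ⟨(wk r).1 (ns r), hin r, bondMap_thread f (wk r).2 _⟩
          have h3 := ha k r hlt (hnsM.monotone hlt.le) (hmsM hlt.le) j hjk
            ((wk r).1 (ms r)) h2
          rwa [bondMap_thread f (wk r).2 (hmsM hlt.le)] at h3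
        · subst heq
          exact ⟨(wk k).1 (ns k), hin k, bondMap_thread f (wk k).2 hjk⟩
      have hSc : IsClosed {p : X (ms k) × X j | p.2 ∈ bondMap f hjk '' H k p.1} := by
        have he : {p : X (ms k) × X j | p.2 ∈ bondMap f hjk '' H k p.1} =
            (fun q : X (ms k) × X (ns k) => (q.1, bondMap f hjk q.2)) ''
              {q : X (ms k) × X (ns k) | q.2 ∈ H k q.1} := by
          ext ⟨x, y⟩
          constructor
          · rintro ⟨a, ha', rfl⟩
            exact ⟨(x, a), ha', rfl⟩
          · rintro ⟨⟨x', a⟩, ha', heq⟩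
            rw [Prod.mk.injEq] at heq
            obtain ⟨rfl, rfl⟩ := heq
            exact mem_image_of_mem _ ha'
        rw [he]
        exact (((husc k).2.2.isCompact).image
          (continuous_fst.prodMk ((bondMap_continuous f hfc hjk).comp
            continuous_snd))).isClosed
      have htendp : Tendsto (fun i => ((wk (φ i)).1 (ms k), (wk (φ i)).1 j)) atTop
          (𝓝 (w.1 (ms k), w.1 j)) := by
        have h1 : Continuous (fun v : ↥(invLim X f) => (v.1 (ms k), v.1 j)) :=
          ((continuous_apply (ms k)).comp continuous_subtype_val).prodMk
            ((continuous_apply j).comp continuous_subtype_val)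
        exact (h1.tendsto w).comp hφt
      exact hSc.mem_of_tendsto htendp (eventually_atTop.mpr
        ⟨k, fun i hi => hmemgen (φ i) (hi.trans (hφ.id_le i))⟩)
    have hdist : dist ((g w).1 j) (w.1 j) ≤ 0 := by
      refine ge_of_tendsto (hc j w) ?_
      filter_upwards [eventually_ge_atTop j] with k hk
      have hjk : j ≤ ns k := hk.trans (hnsM.id_le k)
      rw [dif_pos hjk]
      have hbdd : Bornology.IsBounded (bondMap f hjk '' H k (w.1 (ms k))) :=
        (isCompact_univ.isBounded).subset (subset_univ _)
      exact dist_le_diam_of_mem hbdd (hb k j hjk w) (key k hjk)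
    exact dist_le_zero.mp hdist
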